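/- Let n ∈ ℕ and f : ℝ → ℝ be additive. If the map (α₁,…,α_{n+1}) ↦ δ_{α₁}∘⋯∘δ_{α_{n+1}} f(1) vanishes identically, then f - f(1)·id is an n-th order derivation, i.e., f(x) = d(x) + f(1)·x with d of order n. -/

import Mathlib

noncomputable def δ (α : ℝ) (f : ℝ → ℝ) : ℝ → ℝ := fun x => f (α * x) - α * f x

def IsDerivOfOrder (n : ℕ) (d : ℝ → ℝ) : Prop :=
  (∀ x y : ℝ, d (x + y) = d x + d y) ∧ d 1 = 0 ∧
    ∀ l : List ℝ, l.length = n + 1 → ∀ x : ℝ, (l.foldr δ d) x = 0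

lemma delta_comp (α β : ℝ) (g : ℝ → ℝ) (x : ℝ) :
    δ α (δ β g) x = δ (α * β) g x - β * δ α g x - α * δ β g x := by
  simp only [δ]
  ring_nf

lemma key (n : ℕ) (f : ℝ → ℝ)
    (h : ∀ l : List ℝ, l.length = n + 1 → (l.foldr δ f) 1 = 0) :
    ∀ (k : ℕ) (l : List ℝ), l.length = n + 1 + k → (l.foldr δ f) 1 = 0 := by
  intro k
  induction k with
  | zero => exact h
  | succ k ih =>
    intro l hl
    rcases l with _ | ⟨a, _ | ⟨b, l'⟩⟩
    · exact absurd hl (by simp)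
    · exact absurd hl (by simp; omega)
    · have hl' : l'.length = n + k := by simp at hl; omega
      have h1 : (((a * b) :: l').foldr δ f) 1 = 0 := ih _ (by simp [hl']; omega)
      have h2 : ((a :: l').foldr δ f) 1 = 0 := ih _ (by simp [hl']; omega)
      have h3 : ((b :: l').foldr δ f) 1 = 0 := ih _ (by simp [hl']; omega)
      simp only [List.foldr_cons] at h1 h2 h3 ⊢
      rw [delta_comp, h1, h2, h3]
      ring

lemma sub_linear (l : List ℝ) (c : ℝ) (f : ℝ → ℝ) (hl : l ≠ []) (x : ℝ) :
    (l.foldr δ (fun y => f y - c * y)) x = (l.foldr δ f) x := by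
  have lin : ∀ (m : List ℝ) (y : ℝ),
      (m.foldr δ (fun y => f y - c * y)) y
        = (m.foldr δ f) y - (m.foldr δ (fun y => c * y)) y := by
    intro m
    induction m with
    | nil => intro y; rfl
    | cons a m ihm =>
      intro y
      simp only [List.foldr_cons, δ, ihm]
      ring
  have zlin : ∀ (m : List ℝ), m ≠ [] → ∀ y : ℝ,
      (m.foldr δ (fun y => c * y)) y = 0 := by
    intro m
    induction m with
    | nil => intro hm; exact absurd rfl hm
    | cons a m ihm =>
      intro _ y
      cases m with
      | nil => simp [δ]; ring
      | cons b m' =>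
        simp only [List.foldr_cons, δ] at ihm ⊢
        rw [ihm (by simp), ihm (by simp)]
        ring
  rw [lin, zlin l hl]
  ring

theorem stmt_13 (n : ℕ) (f : ℝ → ℝ)
    (hadd : ∀ x y : ℝ, f (x + y) = f x + f y)
    (h : ∀ l : List ℝ, l.length = n + 1 → (l.foldr δ f) 1 = 0) :
    IsDerivOfOrder n (fun x => f x - f 1 * x) ∧
      ∀ x : ℝ, f x = (f x - f 1 * x) + f 1 * x := by
  constructor
  · refine ⟨?_, by ring, ?_⟩
    · intro x y
      show f (x + y) - f 1 * (x + y) = (f x - f 1 * x) + (f y - f 1 * y)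
      rw [hadd]; ring
    · intro l hl x
      have hne : l ≠ [] := by intro h'; simp [h'] at hl
      rw [sub_linear l (f 1) f hne x]
      -- g x = δ_x g 1 + x * g 1, both zero
      have h1 : ((x :: l).foldr δ f) 1 = 0 := key n f h 1 _ (by simp [hl])
      have h0 : (l.foldr δ f) 1 = 0 := key n f h 0 l hl
      simp only [List.foldr_cons, δ, mul_one] at h1
      rw [h0] at h1
      linarith
  · intro x; ring
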